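/- For every bounded alternation copyless CRA A with regular look-ahead over a commutative semiring there exists an unambiguous bounded alternation copyless CRA A' (a nondeterministic copyless CRA with bounded alternation having exactly one accepting run on every word) that computes the same function, i.e., ⟦A⟧(w) = ⟦A'⟧(w) for every word w ∈ Σ*. -/

import Mathlib

/-! ### Expressions over a semiring with variables -/

/-- Syntax trees of expressions over a semiring `S` with variables in `X`,
built from constants, variables, and the two semiring operations. -/
inductive Expr (S X : Type) : Type where
  | const : S → Expr S X
  | var : X → Expr S X
  | add : Expr S X → Expr S X → Expr S X
  | mul : Expr S X → Expr S X → Expr S X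

namespace Expr

variable {S X Y : Type}

/-- Evaluation of an expression under a valuation `ν : X → S`. -/
def eval [Add S] [Mul S] (ν : X → S) : Expr S X → S
  | const c => c
  | var x => ν x
  | add e₁ e₂ => e₁.eval ν + e₂.eval ν
  | mul e₁ e₂ => e₁.eval ν * e₂.eval ν

/-- Number of occurrences of the variable `x` in an expression. -/
def varCount [DecidableEq X] (x : X) : Expr S X → ℕ
  | const _ => 0
  | var y => if y = x then 1 else 0
  | add e₁ e₂ => e₁.varCount x + e₂.varCount x
  | mul e₁ e₂ => e₁.varCount x + e₂.varCount x

/-- The set `Var(e)` of variables occurring in an expression. -/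
def vars [DecidableEq X] : Expr S X → Finset X
  | const _ => ∅
  | var x => {x}
  | add e₁ e₂ => e₁.vars ∪ e₂.vars
  | mul e₁ e₂ => e₁.vars ∪ e₂.vars

/-- An expression is copyless if every variable occurs at most once in it. -/
def Copyless [DecidableEq X] (e : Expr S X) : Prop :=
  ∀ x : X, e.varCount x ≤ 1

/-- Substituting an expression `σ x` for each variable `x`. -/
def subst (σ : X → Expr S Y) : Expr S X → Expr S Y
  | const c => const c
  | var x => σ x
  | add e₁ e₂ => add (e₁.subst σ) (e₂.subst σ)
  | mul e₁ e₂ => mul (e₁.subst σ) (e₂.subst σ)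

/-- An expression never mentions the constant `0`. -/
def ZeroFree [Zero S] : Expr S X → Prop
  | const c => c ≠ (0 : S)
  | var _ => True
  | add e₁ e₂ => e₁.ZeroFree ∧ e₂.ZeroFree
  | mul e₁ e₂ => e₁.ZeroFree ∧ e₂.ZeroFree

/-- Number of constants mentioned in an expression. -/
def constCount : Expr S X → ℕ
  | const _ => 1
  | var _ => 0
  | add e₁ e₂ => e₁.constCount + e₂.constCount
  | mul e₁ e₂ => e₁.constCount + e₂.constCount

/-- The top node of the expression is a `⊕`-node. -/
def isAddNode : Expr S X → Bool
  | add _ _ => true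
  | _ => false

/-- The top node of the expression is a `⊙`-node. -/
def isMulNode : Expr S X → Bool
  | mul _ _ => true
  | _ => false

/-- The alternation `Alt(e)` of an expression: the maximal number of shifts
between `⊕` and `⊙` along branches of the parse tree. -/
def alt : Expr S X → ℕ
  | const _ => 0
  | var _ => 0
  | add e₁ e₂ =>
      max (e₁.alt + (if e₁.isMulNode then 1 else 0))
          (e₂.alt + (if e₂.isMulNode then 1 else 0)) + 1
  | mul e₁ e₂ =>
      max (e₁.alt + (if e₁.isAddNode then 1 else 0))
          (e₂.alt + (if e₂.isAddNode then 1 else 0)) + 1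

end Expr

/-! ### Substitutions -/

namespace Subs

variable {S X : Type}

/-- A substitution is copyless if each `σ x` is a copyless expression and
distinct registers use disjoint sets of variables. -/
def Copyless [DecidableEq X] (σ : X → Expr S X) : Prop :=
  (∀ x : X, (σ x).Copyless) ∧
    ∀ x y : X, x ≠ y → Disjoint ((σ x).vars) ((σ y).vars)

/-- Composition `σ ∘ τ` of substitutions: `(σ ∘ τ)(x) = σ̂(τ(x))`. -/
def comp (σ τ : X → Expr S X) : X → Expr S X :=
  fun x => (τ x).subst σ

/-- The identity substitution. -/
def idS : X → Expr S X := fun x => Expr.var x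

/-- `σ^n`, the `n`-fold composition of `σ` with itself. -/
def iterate (σ : X → Expr S X) : ℕ → (X → Expr S X)
  | 0 => idS
  | n + 1 => comp σ (iterate σ n)

/-- A substitution is in normal form w.r.t. the order on `X` if every variable
mentioned in `σ x` is at least `x`. -/
def NormalForm [DecidableEq X] [LE X] (σ : X → Expr S X) : Prop :=
  ∀ x y : X, y ∈ (σ x).vars → x ≤ y

/-- The register `x` is `σ`-stable, i.e. `x ∈ Var(σ x)`. -/
def Stable [DecidableEq X] (σ : X → Expr S X) (x : X) : Prop :=
  x ∈ (σ x).vars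

/-- A substitution is collapsing if every non-`σ`-stable register is mapped
to a variable-free (ground) expression. -/
def Collapsing [DecidableEq X] (σ : X → Expr S X) : Prop :=
  ∀ y : X, ¬ Stable σ y → (σ y).vars = ∅

end Subs

/-! ### Cost register automata -/

/-- A cost register automaton over semiring `S`, alphabet `A` and registers `X`. -/
structure CRA (S A X : Type) where
  Q : Type
  [finQ : Fintype Q]
  δ : Q → A → Q × (X → Expr S X)
  q0 : Q
  ν0 : X → S
  μ : Q → Expr S X

attribute [instance] CRA.finQ

namespace CRA

variable {S A X : Type}

/-- One step of the run of a CRA on a letter. -/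
def step [Add S] [Mul S] (M : CRA S A X) (c : M.Q × (X → S)) (a : A) : M.Q × (X → S) :=
  ((M.δ c.1 a).1, fun x => ((M.δ c.1 a).2 x).eval c.2)

/-- The configuration reached by the (unique) run of a CRA on a word. -/
def run [Add S] [Mul S] (M : CRA S A X) (w : List A) : M.Q × (X → S) :=
  w.foldl M.step (M.q0, M.ν0)

/-- The output `⟦M⟧(w)` of the CRA on the word `w`. -/
def output [Add S] [Mul S] (M : CRA S A X) (w : List A) : S :=
  (M.μ (M.run w).1).eval (M.run w).2

/-- A CRA is copyless if all its transition substitutions and all its output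
expressions are copyless. -/
def CopylessCRA [DecidableEq X] (M : CRA S A X) : Prop :=
  (∀ (q : M.Q) (a : A), Subs.Copyless (M.δ q a).2) ∧
    ∀ q : M.Q, (M.μ q).Copyless

/-- The transitive closure `δ*` of the transition function, composing the
substitutions along the word. -/
def deltaStar (M : CRA S A X) (q : M.Q) : List A → M.Q × (X → Expr S X)
  | [] => (q, Subs.idS)
  | a :: w =>
      ((M.deltaStar (M.δ q a).1 w).1,
        Subs.comp (M.δ q a).2 ((M.deltaStar (M.δ q a).1 w).2))

/-- A CRA is in normal form if all its transition substitutions are. -/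
def NormalFormCRA [DecidableEq X] [LE X] (M : CRA S A X) : Prop :=
  ∀ (q : M.Q) (a : A), Subs.NormalForm (M.δ q a).2

/-- A register is stable in `M` if it is stable on every substitution occurring
in `δ*`. -/
def StableIn [DecidableEq X] (M : CRA S A X) (x : X) : Prop :=
  ∀ (q : M.Q) (w : List A), Subs.Stable (M.deltaStar q w).2 x

/-- Every state of `M` is reachable from every state. -/
def StronglyConnected (M : CRA S A X) : Prop :=
  ∀ q q' : M.Q, ∃ w : List A, (M.deltaStar q w).1 = q'

/-- The ground expression `ν0 ∘ σ1 ∘ … ∘ σn ∘ μ(qn)` arising from the run on `w`. -/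
def groundExpr (M : CRA S A X) (w : List A) : Expr S X :=
  ((M.μ (M.deltaStar M.q0 w).1).subst ((M.deltaStar M.q0 w).2)).subst
    (fun x => Expr.const (M.ν0 x))

/-- The CRA has bounded alternation: the alternation of all ground output
expressions is uniformly bounded. -/
def BoundedAlt (M : CRA S A X) : Prop :=
  ∃ N : ℕ, ∀ w : List A, (M.groundExpr w).alt ≤ N

end CRA
/-! ### CRA with regular look-ahead -/

/-- A transition of a CRA with regular look-ahead: from state `src`, if the
remaining input suffix belongs to the regular language `lang`, go to `tgt`
applying the substitution `sub`. -/
structure RLATrans (S A X Q : Type) where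
  src : Q
  lang : Language A
  regular : ∃ (n : ℕ) (D : DFA A (Fin n)), lang = D.accepts
  tgt : Q
  sub : X → Expr S X

/-- A cost register automaton with regular look-ahead: finitely many
transitions, and the look-ahead languages of transitions leaving the same state
are pairwise disjoint. -/
structure CRARLA (S A X : Type) where
  Q : Type
  [finQ : Fintype Q]
  trans : List (RLATrans S A X Q)
  disj : ∀ t₁ ∈ trans, ∀ t₂ ∈ trans, t₁ ≠ t₂ → t₁.src = t₂.src →
    Disjoint t₁.lang t₂.lang
  q0 : Q
  ν0 : X → S
  μ : Q → Expr S X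

attribute [instance] CRARLA.finQ

namespace CRARLA

variable {S A X : Type}

open Classical in
/-- Run of the look-ahead CRA from a configuration: at each position, take the
(unique) transition from the current state whose look-ahead language contains
the remaining suffix; `none` if no transition applies. -/
noncomputable def outAux [Add S] [Mul S] (M : CRARLA S A X) :
    M.Q → (X → S) → List A → Option S
  | q, ν, [] => some ((M.μ q).eval ν)
  | q, ν, a :: w =>
      if h : ∃ t ∈ M.trans, t.src = q ∧ (a :: w) ∈ t.lang then
        M.outAux h.choose.tgt (fun x => (h.choose.sub x).eval ν) w
      else none

/-- The output `⟦M⟧(w)` of the look-ahead CRA (defined when a run exists). -/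
noncomputable def outputRLA [Add S] [Mul S] (M : CRARLA S A X) (w : List A) :
    Option S :=
  M.outAux M.q0 M.ν0 w

open Classical in
/-- The composed substitution along the run, turned into the ground expression
`ν0 ∘ σ1 ∘ … ∘ σn ∘ μ(qn)`. -/
noncomputable def groundAux (M : CRARLA S A X) :
    M.Q → (X → Expr S X) → List A → Option (Expr S X)
  | q, σ, [] => some (((M.μ q).subst σ).subst (fun x => Expr.const (M.ν0 x)))
  | q, σ, a :: w =>
      if h : ∃ t ∈ M.trans, t.src = q ∧ (a :: w) ∈ t.lang then
        M.groundAux h.choose.tgt (fun x => (h.choose.sub x).subst σ) w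
      else none

/-- The ground output expression of the run on `w` (when a run exists). -/
noncomputable def ground (M : CRARLA S A X) (w : List A) : Option (Expr S X) :=
  M.groundAux M.q0 (fun x => Expr.var x) w

/-- The look-ahead CRA is copyless. -/
def CopylessRLA [DecidableEq X] (M : CRARLA S A X) : Prop :=
  (∀ t ∈ M.trans, Subs.Copyless t.sub) ∧ ∀ q : M.Q, (M.μ q).Copyless

/-- The look-ahead CRA has bounded alternation: the alternation of every ground
output expression arising from a run is uniformly bounded. -/
def BoundedAltRLA (M : CRARLA S A X) : Prop :=
  ∃ N : ℕ, ∀ (w : List A) (e : Expr S X), M.ground w = some e → e.alt ≤ N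

end CRARLA
/-! ### Nondeterministic cost register automata -/

/-- A nondeterministic CRA: `Δ q a q'` is the (at most one) substitution
labelling the transition `(q, a, q')`, and `F` is the set of final states. -/
structure NCRA (S A X : Type) where
  Q : Type
  [finQ : Fintype Q]
  Δ : Q → A → Q → Option (X → Expr S X)
  q0 : Q
  ν0 : X → S
  F : Set Q
  μ : Q → Expr S X

attribute [instance] NCRA.finQ

namespace NCRA

variable {S A X : Type}

/-- `r` is a run of `M` on `w` (a sequence of states starting in `q0` following
transitions of `Δ`). -/
def IsRun (M : NCRA S A X) (w : List A) (r : Fin (w.length + 1) → M.Q) : Prop :=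
  r 0 = M.q0 ∧
    ∀ i : Fin w.length, (M.Δ (r i.castSucc) (w.get i) (r i.succ)).isSome

/-- `r` is an accepting run of `M` on `w`. -/
def IsAccRun (M : NCRA S A X) (w : List A) (r : Fin (w.length + 1) → M.Q) : Prop :=
  M.IsRun w r ∧ r (Fin.last w.length) ∈ M.F

/-- `M` is unambiguous: every word has exactly one accepting run. -/
def Unambiguous (M : NCRA S A X) : Prop :=
  ∀ w : List A, ∃! r : Fin (w.length + 1) → M.Q, M.IsAccRun w r

/-- `M` is copyless. -/
def CopylessNCRA [DecidableEq X] (M : NCRA S A X) : Prop :=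
  (∀ (q : M.Q) (a : A) (q' : M.Q) (σ : X → Expr S X),
      M.Δ q a q' = some σ → Subs.Copyless σ) ∧
    ∀ q : M.Q, (M.μ q).Copyless

/-- `M.ReachE w q σ`: some run of `M` on `w` ends in state `q` with composed
substitution `σ` (over the initial register contents). -/
inductive ReachE (M : NCRA S A X) : List A → M.Q → (X → Expr S X) → Prop where
  | nil : ReachE M [] M.q0 (fun x => Expr.var x)
  | snoc {w : List A} {q : M.Q} {σ : X → Expr S X} {a : A} {q' : M.Q}
      {τ : X → Expr S X} :
      ReachE M w q σ → M.Δ q a q' = some τ →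
      ReachE M (w ++ [a]) q' (fun x => (τ x).subst σ)

/-- The ground output expression at state `q` with composed substitution `σ`. -/
def groundOf (M : NCRA S A X) (q : M.Q) (σ : X → Expr S X) : Expr S X :=
  ((M.μ q).subst σ).subst (fun x => Expr.const (M.ν0 x))

/-- `M` has bounded alternation: the alternation of the ground output
expression of every accepting run is uniformly bounded. -/
def BoundedAltNCRA (M : NCRA S A X) : Prop :=
  ∃ N : ℕ, ∀ (w : List A) (q : M.Q) (σ : X → Expr S X),
    M.ReachE w q σ → q ∈ M.F → (M.groundOf q σ).alt ≤ N

end NCRA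


/-! ### Auxiliary development for Statement 14 -/

namespace BACaux

open scoped Classical

lemma eval_subst {S X Y : Type} [CommSemiring S] (σ : X → Expr S Y) (ν : Y → S) :
    ∀ e : Expr S X, (e.subst σ).eval ν = e.eval (fun x => (σ x).eval ν)
  | .const c => rfl
  | .var x => rfl
  | .add e₁ e₂ => by
      simp [Expr.subst, Expr.eval, eval_subst σ ν e₁, eval_subst σ ν e₂]
  | .mul e₁ e₂ => by
      simp [Expr.subst, Expr.eval, eval_subst σ ν e₁, eval_subst σ ν e₂]

variable {S A X : Type} [CommSemiring S] [DecidableEq X] [Fintype X]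

section

variable (M : CRARLA S A X)

/-- Number of states of the chosen DFA for the `i`-th transition. -/
noncomputable def nD (i : Fin M.trans.length) : ℕ :=
  (M.trans.get i).regular.choose

/-- The chosen DFA for the `i`-th transition. -/
noncomputable def Dfa (i : Fin M.trans.length) : DFA A (Fin (nD M i)) :=
  (M.trans.get i).regular.choose_spec.choose

lemma lang_eq (i : Fin M.trans.length) :
    (M.trans.get i).lang = (Dfa M i).accepts :=
  (M.trans.get i).regular.choose_spec.choose_spec

/-- State space of the product DFA. -/
def PSt : Type := ∀ i : Fin M.trans.length, Fin (nD M i)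

noncomputable instance : Fintype (PSt M) := by unfold PSt; infer_instance

noncomputable instance : DecidableEq (PSt M) := Classical.decEq _

noncomputable def stepP (d : PSt M) (a : A) : PSt M := fun i => (Dfa M i).step (d i) a

noncomputable def startP : PSt M := fun i => (Dfa M i).start

/-- The function mapping a product state `d` to the product state reached from
`d` reading `w`. -/
noncomputable def sfx (w : List A) (d : PSt M) : PSt M :=
  fun i => (Dfa M i).evalFrom (d i) w

lemma sfx_nil : sfx M [] = id := rfl

lemma sfx_cons (a : A) (w : List A) :
    sfx M (a :: w) = fun d => sfx M w (stepP M d a) := rfl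

lemma mem_lang_iff (i : Fin M.trans.length) (w : List A) :
    w ∈ (M.trans.get i).lang ↔ sfx M w (startP M) i ∈ (Dfa M i).accept := by
  rw [lang_eq]
  exact DFA.mem_accepts (Dfa M i)

lemma accCond (a : A) (w₂ : List A) (i : Fin M.trans.length) :
    sfx M w₂ (stepP M (startP M) a) i ∈ (Dfa M i).accept ↔
      (a :: w₂) ∈ (M.trans.get i).lang := by
  rw [mem_lang_iff]
  rfl

lemma uniqT {t₁ t₂ : RLATrans S A X M.Q} (h₁ : t₁ ∈ M.trans) (h₂ : t₂ ∈ M.trans)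
    (hs : t₁.src = t₂.src) {w : List A} (hw₁ : w ∈ t₁.lang) (hw₂ : w ∈ t₂.lang) :
    t₁ = t₂ := by
  by_contra hne
  exact Set.disjoint_left.mp (M.disj t₁ h₁ t₂ h₂ hne hs) hw₁ hw₂

/-- State space of the unambiguous NCRA: `none` is the initial state, a state
`some (q, f)` records the `M`-state `q` together with the guessed suffix
behaviour `f` of the product DFA. -/
def QN : Type := Option (M.Q × (PSt M → PSt M))

noncomputable instance : Fintype (QN M) := by
  unfold QN
  have : DecidableEq M.Q := Classical.decEq _
  infer_instance

/-- The transition function of the unambiguous NCRA. -/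
noncomputable def Del : QN M → A → QN M → Option (X → Expr S X)
  | none, a, some (q', f') =>
      if h : ∃ j : Fin M.trans.length, (M.trans.get j).src = M.q0 ∧
          (M.trans.get j).tgt = q' ∧
          f' (stepP M (startP M) a) j ∈ (Dfa M j).accept
      then some (M.trans.get h.choose).sub else none
  | some (q, f), a, some (q', f') =>
      if h : f = (fun d => f' (stepP M d a)) ∧ ∃ j : Fin M.trans.length,
          (M.trans.get j).src = q ∧ (M.trans.get j).tgt = q' ∧
          f' (stepP M (startP M) a) j ∈ (Dfa M j).accept
      then some (M.trans.get h.2.choose).sub else none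
  | _, _, none => none

lemma Del_to_none (s : QN M) (a : A) : Del M s a none = none := by
  cases s <;> rfl

lemma Del_none_eq {a : A} {w₂ : List A} {t : RLATrans S A X M.Q}
    (ht : t ∈ M.trans) (hs : t.src = M.q0) (hm : (a :: w₂) ∈ t.lang) :
    Del M none a (some (t.tgt, sfx M w₂)) = some t.sub := by
  obtain ⟨j, hj⟩ := List.mem_iff_get.mp ht
  have h : ∃ j : Fin M.trans.length, (M.trans.get j).src = M.q0 ∧
      (M.trans.get j).tgt = t.tgt ∧
      sfx M w₂ (stepP M (startP M) a) j ∈ (Dfa M j).accept :=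
    ⟨j, by rw [hj]; exact hs, by rw [hj], (accCond M a w₂ j).mpr (by rw [hj]; exact hm)⟩
  rw [Del, dif_pos h]
  obtain ⟨h1, h2, h3⟩ := h.choose_spec
  have := uniqT M (List.get_mem _ _) ht (h1.trans hs.symm)
    ((accCond M a w₂ h.choose).mp h3) hm
  exact congrArg (fun t => some t.sub) this

lemma Del_some_eq {a : A} {w₂ : List A} {q : M.Q} {t : RLATrans S A X M.Q}
    (ht : t ∈ M.trans) (hs : t.src = q) (hm : (a :: w₂) ∈ t.lang) :
    Del M (some (q, sfx M (a :: w₂))) a (some (t.tgt, sfx M w₂)) = some t.sub := by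
  obtain ⟨j, hj⟩ := List.mem_iff_get.mp ht
  have h : sfx M (a :: w₂) = (fun d => sfx M w₂ (stepP M d a)) ∧
      ∃ j : Fin M.trans.length, (M.trans.get j).src = q ∧
      (M.trans.get j).tgt = t.tgt ∧
      sfx M w₂ (stepP M (startP M) a) j ∈ (Dfa M j).accept :=
    ⟨rfl, j, by rw [hj]; exact hs, by rw [hj],
      (accCond M a w₂ j).mpr (by rw [hj]; exact hm)⟩
  rw [Del, dif_pos h]
  obtain ⟨h1, h2, h3⟩ := h.2.choose_spec
  have := uniqT M (List.get_mem _ _) ht (h1.trans hs.symm)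
    ((accCond M a w₂ h.2.choose).mp h3) hm
  exact congrArg (fun t => some t.sub) this

lemma Del_inv_none {a : A} {q' : M.Q} {f' : PSt M → PSt M} {τ : X → Expr S X}
    (h : Del M none a (some (q', f')) = some τ) (w₂ : List A) (hf : f' = sfx M w₂) :
    ∃ t ∈ M.trans, t.src = M.q0 ∧ t.tgt = q' ∧ (a :: w₂) ∈ t.lang ∧ τ = t.sub := by
  rw [Del] at h
  split at h
  · next hP =>
      obtain ⟨h1, h2, h3⟩ := hP.choose_spec
      subst hf
      exact ⟨M.trans.get hP.choose, List.get_mem _ _, h1, h2,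
        (accCond M a w₂ hP.choose).mp h3, (Option.some.inj h).symm⟩
  · exact absurd h (by simp)

lemma Del_inv_some {a : A} {q q' : M.Q} {f f' : PSt M → PSt M} {τ : X → Expr S X}
    (h : Del M (some (q, f)) a (some (q', f')) = some τ) (w₂ : List A)
    (hf : f' = sfx M w₂) :
    f = sfx M (a :: w₂) ∧
      ∃ t ∈ M.trans, t.src = q ∧ t.tgt = q' ∧ (a :: w₂) ∈ t.lang ∧ τ = t.sub := by
  rw [Del] at h
  split at h
  · next hP =>
      obtain ⟨h1, h2, h3⟩ := hP.2.choose_spec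
      subst hf
      exact ⟨hP.1, M.trans.get hP.2.choose, List.get_mem _ _, h1, h2,
        (accCond M a w₂ hP.2.choose).mp h3, (Option.some.inj h).symm⟩
  · exact absurd h (by simp)

lemma Del_inv_sub {s s' : QN M} {a : A} {τ : X → Expr S X}
    (h : Del M s a s' = some τ) : ∃ t ∈ M.trans, τ = t.sub := by
  match s, s' with
  | _, none => rw [Del_to_none] at h; exact absurd h (by simp)
  | none, some (q', f') =>
      rw [Del] at h
      split at h
      · next hP => exact ⟨M.trans.get hP.choose, List.get_mem _ _,
          (Option.some.inj h).symm⟩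
      · exact absurd h (by simp)
  | some (q, f), some (q', f') =>
      rw [Del] at h
      split at h
      · next hP => exact ⟨M.trans.get hP.2.choose, List.get_mem _ _,
          (Option.some.inj h).symm⟩
      · exact absurd h (by simp)

/-- The unambiguous NCRA. -/
noncomputable def MN : NCRA S A X where
  Q := QN M
  Δ := Del M
  q0 := none
  ν0 := M.ν0
  F := {s | s = none ∨ ∃ q : M.Q, s = some (q, id)}
  μ := fun s => match s with
    | none => M.μ M.q0
    | some (q, _) => M.μ q

lemma MN_Q : (MN M).Q = QN M := rfl
lemma MN_Delta : (MN M).Δ = Del M := rfl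
lemma MN_q0 : (MN M).q0 = (none : QN M) := rfl
lemma MN_nu0 : (MN M).ν0 = M.ν0 := rfl
lemma MN_F : (MN M).F = {s : QN M | s = none ∨ ∃ q : M.Q, s = some (q, id)} := rfl
lemma MN_mu_none : (MN M).μ none = M.μ M.q0 := rfl
lemma MN_mu_some (q : M.Q) (f : PSt M → PSt M) : (MN M).μ (some (q, f)) = M.μ q := rfl

/-- Unfolding the look-ahead run on a cons, given the (unique) applicable
transition. -/
lemma outAux_cons {q : M.Q} {a : A} {w : List A} {ν : X → S}
    {t : RLATrans S A X M.Q} (ht : t ∈ M.trans) (hs : t.src = q)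
    (hm : (a :: w) ∈ t.lang) :
    M.outAux q ν (a :: w) = M.outAux t.tgt (fun x => (t.sub x).eval ν) w := by
  have h : ∃ t ∈ M.trans, t.src = q ∧ (a :: w) ∈ t.lang := ⟨t, ht, hs, hm⟩
  have hc : h.choose = t := by
    obtain ⟨h1, h2, h3⟩ := h.choose_spec
    exact uniqT M h1 ht (h2.trans hs.symm) h3 hm
  rw [CRARLA.outAux, dif_pos h, hc]

lemma groundAux_cons {q : M.Q} {a : A} {w : List A} {σ : X → Expr S X}
    {t : RLATrans S A X M.Q} (ht : t ∈ M.trans) (hs : t.src = q)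
    (hm : (a :: w) ∈ t.lang) :
    M.groundAux q σ (a :: w) = M.groundAux t.tgt (fun x => (t.sub x).subst σ) w := by
  have h : ∃ t ∈ M.trans, t.src = q ∧ (a :: w) ∈ t.lang := ⟨t, ht, hs, hm⟩
  have hc : h.choose = t := by
    obtain ⟨h1, h2, h3⟩ := h.choose_spec
    exact uniqT M h1 ht (h2.trans hs.symm) h3 hm
  rw [CRARLA.groundAux, dif_pos h, hc]

lemma outAux_cons_ex {q : M.Q} {ν : X → S} {a : A} {w : List A}
    (h : (M.outAux q ν (a :: w)).isSome) :
    ∃ t ∈ M.trans, t.src = q ∧ (a :: w) ∈ t.lang := by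
  by_contra hP
  rw [CRARLA.outAux, dif_neg hP] at h
  simp at h

/-- The canonical state of `M` reached after reading `i` letters of `w` from `q`. -/
noncomputable def qA : M.Q → List A → ℕ → M.Q
  | q, _, 0 => q
  | q, [], _ + 1 => q
  | q, a :: w, i + 1 =>
      if h : ∃ t ∈ M.trans, t.src = q ∧ (a :: w) ∈ t.lang
      then qA h.choose.tgt w i else q

lemma qA_zero (q : M.Q) (w : List A) : qA M q w 0 = q := by cases w <;> rfl

lemma qA_step : ∀ (w : List A) (i : ℕ) (q : M.Q) (ν : X → S),
    (M.outAux q ν w).isSome → i < w.length →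
    ∃ t ∈ M.trans, t.src = qA M q w i ∧ (w.drop i) ∈ t.lang ∧
      qA M q w (i + 1) = t.tgt
  | [], i, q, ν, _, hi => absurd hi (by simp)
  | a :: w, i, q, ν, hS, hi => by
      have h : ∃ t ∈ M.trans, t.src = q ∧ (a :: w) ∈ t.lang := outAux_cons_ex M hS
      obtain ⟨h1, h2, h3⟩ := h.choose_spec
      have hS' : (M.outAux h.choose.tgt (fun x => (h.choose.sub x).eval ν) w).isSome := by
        rwa [CRARLA.outAux, dif_pos h] at hS
      match i with
      | 0 =>
          refine ⟨h.choose, h1, ?_, h3, ?_⟩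
          · rw [qA_zero]; exact h2
          · rw [qA, dif_pos h, qA_zero]
      | i + 1 =>
          have hi' : i < w.length := by simpa using hi
          obtain ⟨t, ht, hts, htm, htq⟩ := qA_step w i h.choose.tgt _ hS' hi'
          refine ⟨t, ht, ?_, ?_, ?_⟩
          · rw [qA, dif_pos h]; exact hts
          · simpa using htm
          · rw [qA, dif_pos h]; exact htq

/-- Invariant of reachable configurations of `MN M`. -/
lemma reach_inv {w : List A} {s : QN M} {σ : X → Expr S X}
    (h : (MN M).ReachE w s σ) :
    (s = none → w = [] ∧ σ = fun x => Expr.var x) ∧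
    (∀ (q : M.Q) (f : PSt M → PSt M), s = some (q, f) → ∀ w₂ : List A,
      f = sfx M w₂ →
      (∀ ν : X → S, M.outAux M.q0 ν (w ++ w₂) =
        M.outAux q (fun x => (σ x).eval ν) w₂) ∧
      M.groundAux M.q0 (fun x => Expr.var x) (w ++ w₂) = M.groundAux q σ w₂) := by
  obtain ⟨s', rfl⟩ : ∃ s' : (MN M).Q, (s' : QN M) = s := ⟨s, rfl⟩
  induction h with
  | nil =>
      refine ⟨fun _ => ⟨rfl, rfl⟩, fun q f hsf => ?_⟩
      exact absurd hsf (by simp [MN_q0])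
  | @snoc w p σ a p' τ hre hΔ ih =>
      rw [MN_Delta] at hΔ
      constructor
      · intro hp'
        rw [hp'] at hΔ; have hΔ := (Del_to_none M p a).symm.trans hΔ
        exact absurd hΔ (by simp)
      · intro q₂ f₂ hp' w₂ hf₂
        subst hp'
        match p with
        | none =>
            obtain ⟨hw, hσ⟩ := ih.1 rfl
            subst hw; subst hσ
            obtain ⟨t, ht, hsrc, htgt, hmem, hτ⟩ := Del_inv_none M hΔ w₂ hf₂
            subst htgt; subst hτ
            constructor
            · intro ν
              have := outAux_cons M ht hsrc hmem (ν := ν)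
              simp only [List.nil_append, List.singleton_append]
              rw [this]
              congr 1
              funext x
              simp [eval_subst, Expr.eval]
            · have := groundAux_cons M ht hsrc hmem
                (σ := fun x : X => Expr.var x)
              simp only [List.nil_append, List.singleton_append]
              rw [this]
        | some (q₁, f₁) =>
            obtain ⟨hf₁, t, ht, hsrc, htgt, hmem, hτ⟩ := Del_inv_some M hΔ w₂ hf₂
            subst htgt; subst hτ
            have IH := ih.2 q₁ f₁ rfl (a :: w₂) hf₁
            constructor
            · intro ν
              have h1 := IH.1 ν
              have h2 := outAux_cons M ht hsrc hmem
                (ν := fun x => (σ x).eval ν)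
              rw [List.append_assoc, List.singleton_append, h1, h2]
              congr 1
              funext x
              rw [eval_subst]
            · have h1 := IH.2
              have h2 := groundAux_cons M ht hsrc hmem (σ := σ)
              rw [List.append_assoc, List.singleton_append, h1, h2]

/-- Reaching a final state yields the output and ground expression of `M`. -/
lemma reach_final {w : List A} {s : QN M} {σ : X → Expr S X}
    (h : (MN M).ReachE w s σ) (hF : s ∈ (MN M).F) :
    M.outputRLA w = some ((((MN M).μ s).subst σ).eval M.ν0) ∧
    M.ground w = some ((((MN M).μ s).subst σ).subst (fun x => Expr.const (M.ν0 x))) := by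
  rcases hF with hnone | ⟨q, hq⟩
  · subst hnone
    obtain ⟨hw, hσ⟩ := (reach_inv M h).1 rfl
    subst hw; subst hσ
    constructor
    · show M.outAux M.q0 M.ν0 [] = _
      rw [CRARLA.outAux, MN_mu_none]
      congr 1
      rw [eval_subst]
      rfl
    · rfl
  · subst hq
    have hid : (id : PSt M → PSt M) = sfx M [] := rfl
    obtain ⟨Hout, Hgr⟩ := (reach_inv M h).2 q id rfl [] hid
    rw [List.append_nil] at Hout Hgr
    constructor
    · show M.outAux M.q0 M.ν0 w = _
      rw [Hout M.ν0, CRARLA.outAux, MN_mu_some]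
      congr 1
      rw [eval_subst]
    · show M.groundAux M.q0 _ w = _
      rw [Hgr, CRARLA.groundAux, MN_mu_some]

/-- The canonical run of `MN M` on `w`. -/
noncomputable def rW (w : List A) : Fin (w.length + 1) → QN M :=
  fun i => if i.1 = 0 then none else
    some (qA M M.q0 w i.1, sfx M (w.drop i.1))

lemma rW_zero (w : List A) : rW M w 0 = none := rfl

lemma rW_succ (w : List A) (i : ℕ) (hi : i + 1 < w.length + 1) :
    rW M w ⟨i + 1, hi⟩ = some (qA M M.q0 w (i + 1), sfx M (w.drop (i + 1))) := by
  exact if_neg (Nat.succ_ne_zero i)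

lemma rW_step {w : List A} (H : (M.outAux M.q0 M.ν0 w).isSome)
    (i : ℕ) (hi : i < w.length) :
    ∃ τ : X → Expr S X,
      Del M (rW M w ⟨i, by omega⟩) (w.get ⟨i, hi⟩) (rW M w ⟨i + 1, by omega⟩) = some τ := by
  obtain ⟨t, ht, hsrc, hmem, hq⟩ := qA_step M w i M.q0 M.ν0 H hi
  have hdrop : w.drop i = w.get ⟨i, hi⟩ :: w.drop (i + 1) := by
    simpa using List.drop_eq_getElem_cons hi
  rw [rW_succ M w i (by omega), hq]
  match i with
  | 0 =>
      have h0 : rW M w ⟨0, by omega⟩ = none := rfl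
      rw [h0]
      refine ⟨t.sub, Del_none_eq M ht ?_ ?_⟩
      · rw [← qA_zero M M.q0 w]; exact hsrc
      · rw [← hdrop]; simpa using hmem
  | i + 1 =>
      rw [rW_succ M w i (by omega)]
      refine ⟨t.sub, ?_⟩
      have hmem' : (w.get ⟨i + 1, hi⟩ :: w.drop (i + 1 + 1)) ∈ t.lang := by
        rw [← hdrop]; exact hmem
      have := Del_some_eq M ht hsrc hmem'
      rw [← hdrop] at this
      exact this

lemma rW_isAccRun {w : List A} (H : (M.outAux M.q0 M.ν0 w).isSome) :
    (MN M).IsAccRun w (rW M w) := by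
  refine ⟨⟨rfl, ?_⟩, ?_⟩
  · intro i
    obtain ⟨τ, hτ⟩ := rW_step M H i.1 i.isLt
    rw [MN_Delta]
    have h1 : i.castSucc = (⟨i.1, by omega⟩ : Fin (w.length + 1)) := rfl
    have h2 : i.succ = (⟨i.1 + 1, by omega⟩ : Fin (w.length + 1)) := rfl
    have h3 : w.get i = w.get ⟨i.1, i.isLt⟩ := rfl
    rw [h1, h2, h3, hτ]
    rfl
  · show rW M w (Fin.last w.length) ∈ (MN M).F
    rw [MN_F]
    rcases Nat.eq_zero_or_pos w.length with h0 | hpos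
    · left
      exact if_pos h0
    · right
      refine ⟨qA M M.q0 w w.length, ?_⟩
      have hne : w.length ≠ 0 := by omega
      have : rW M w (Fin.last w.length) =
          some (qA M M.q0 w w.length, sfx M (w.drop w.length)) := by
        simp only [rW, Fin.val_last]
        exact if_neg hne
      rw [this, List.drop_length, sfx_nil]

lemma run_not_none {w : List A} {r : Fin (w.length + 1) → QN M}
    (hr : (MN M).IsAccRun w r) (i : ℕ) (h1 : 0 < i) (h2 : i < w.length + 1) :
    r ⟨i, h2⟩ ≠ none := by
  intro hnone
  have step := hr.1.2 ⟨i - 1, by omega⟩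
  rw [MN_Delta] at step
  have hsucc : (⟨i - 1, by omega⟩ : Fin w.length).succ = (⟨i, h2⟩ : Fin (w.length + 1)) := by
    apply Fin.ext
    simp
    omega
  rw [hsucc, hnone, Del_to_none] at step
  simp at step

lemma run_f_correct {w : List A} {r : Fin (w.length + 1) → QN M}
    (hr : (MN M).IsAccRun w r) :
    ∀ (d i : ℕ) (hd : i + d = w.length), 0 < i →
      ∃ q : M.Q, r ⟨i, by omega⟩ = some (q, sfx M (w.drop i)) := by
  intro d
  induction d with
  | zero =>
      intro i hd hpos
      have hlast : (⟨i, by omega⟩ : Fin (w.length + 1)) = Fin.last w.length := by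
        apply Fin.ext; simp; omega
      have hF := hr.2
      rw [← hlast] at hF
      rw [MN_F] at hF
      rcases hF with hnone | ⟨q, hq⟩
      · exact absurd hnone (run_not_none M hr i hpos (by omega))
      · refine ⟨q, ?_⟩
        rw [hq]
        have : w.drop i = [] := by
          apply List.drop_eq_nil_of_le; omega
        rw [this, sfx_nil]
  | succ d ihd =>
      intro i hd hpos
      obtain ⟨q', hq'⟩ := ihd (i + 1) (by omega) (by omega)
      have step := hr.1.2 ⟨i, by omega⟩
      rw [MN_Delta] at step
      have hcast : (⟨i, by omega⟩ : Fin w.length).castSucc =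
          (⟨i, by omega⟩ : Fin (w.length + 1)) := rfl
      have hsucc : (⟨i, by omega⟩ : Fin w.length).succ =
          (⟨i + 1, by omega⟩ : Fin (w.length + 1)) := rfl
      rw [hcast, hsucc, hq'] at step
      obtain ⟨p, hp⟩ := Option.ne_none_iff_exists'.mp
        (run_not_none M hr i hpos (by omega))
      obtain ⟨q, f⟩ := p
      rw [hp] at step
      obtain ⟨τ, hτ⟩ := Option.isSome_iff_exists.mp step
      have hinv := Del_inv_some M hτ (w.drop (i + 1)) rfl
      refine ⟨q, ?_⟩
      rw [hp, hinv.1]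
      congr 1
      have : w.drop i = w.get ⟨i, by omega⟩ :: w.drop (i + 1) := by
        simpa using List.drop_eq_getElem_cons (l := w) (n := i) (by omega)
      rw [this]

lemma run_unique {w : List A} (H : (M.outAux M.q0 M.ν0 w).isSome)
    {r : Fin (w.length + 1) → QN M} (hr : (MN M).IsAccRun w r) :
    r = rW M w := by
  have key : ∀ (i : ℕ) (hi : i < w.length + 1), r ⟨i, hi⟩ = rW M w ⟨i, hi⟩ := by
    intro i
    induction i with
    | zero =>
        intro hi
        have := hr.1.1
        rw [MN_q0] at this
        rw [show (⟨0, hi⟩ : Fin (w.length + 1)) = 0 from rfl, this, rW_zero]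
    | succ i ihi =>
        intro hi
        have hlen : i < w.length := by omega
        have step := hr.1.2 ⟨i, hlen⟩
        rw [MN_Delta] at step
        have hcast : (⟨i, hlen⟩ : Fin w.length).castSucc =
            (⟨i, by omega⟩ : Fin (w.length + 1)) := rfl
        have hsucc : (⟨i, hlen⟩ : Fin w.length).succ =
            (⟨i + 1, hi⟩ : Fin (w.length + 1)) := rfl
        rw [hcast, hsucc] at step
        obtain ⟨q', hq'⟩ := run_f_correct M hr (w.length - (i + 1)) (i + 1)
          (by omega) (by omega)
        rw [hq'] at step
        obtain ⟨τ, hτ⟩ := Option.isSome_iff_exists.mp step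
        obtain ⟨t₁, ht₁, hsrc₁, hmem₁, hq₁⟩ := qA_step M w i M.q0 M.ν0 H hlen
        have hdrop : w.drop i = w.get ⟨i, hlen⟩ :: w.drop (i + 1) := by
          simpa using List.drop_eq_getElem_cons hlen
        have hr_i := ihi (by omega)
        have hgoal : q' = qA M M.q0 w (i + 1) := by
          cases i with
          | zero =>
              have hz : r ⟨0, by omega⟩ = none := hr.1.1
              rw [hz] at hτ
              obtain ⟨t, ht, hsrc, htgt, hmem, _⟩ := Del_inv_none M hτ (w.drop 1) rfl
              have hmem' : w.drop 0 ∈ t.lang := by rw [hdrop]; exact hmem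
              have heq : t = t₁ := uniqT M ht ht₁
                (by rw [hsrc, hsrc₁, qA_zero]) hmem' hmem₁
              rw [← htgt, heq, ← hq₁]
          | succ i' =>
              rw [rW_succ M w i' (by omega)] at hr_i
              rw [hr_i] at hτ
              obtain ⟨_, t, ht, hsrc, htgt, hmem, _⟩ := Del_inv_some M hτ
                (w.drop (i' + 1 + 1)) rfl
              have hmem' : w.drop (i' + 1) ∈ t.lang := by rw [hdrop]; exact hmem
              have heq : t = t₁ := uniqT M ht ht₁ (by rw [hsrc, hsrc₁]) hmem' hmem₁
              rw [← htgt, heq, ← hq₁]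
        rw [hq', rW_succ M w i hi, hgoal]
  funext i
  have := key i.1 i.isLt
  simpa using this

lemma reach_exists {w : List A} (H : (M.outAux M.q0 M.ν0 w).isSome) :
    ∀ (i : ℕ) (hi : i < w.length + 1),
      ∃ σ : X → Expr S X, (MN M).ReachE (w.take i) (rW M w ⟨i, hi⟩) σ := by
  intro i
  induction i with
  | zero =>
      intro hi
      refine ⟨fun x => Expr.var x, ?_⟩
      rw [show (⟨0, hi⟩ : Fin (w.length + 1)) = 0 from rfl, rW_zero]
      exact NCRA.ReachE.nil (M := MN M)
  | succ i ihi =>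
      intro hi
      obtain ⟨σ, hσ⟩ := ihi (by omega)
      have hlen : i < w.length := by omega
      obtain ⟨τ, hτ⟩ := rW_step M H i hlen
      have htake : w.take (i + 1) = w.take i ++ [w.get ⟨i, hlen⟩] := by
        have := List.take_concat_get hlen
        simpa [List.concat_eq_append] using this.symm
      refine ⟨fun x => (τ x).subst σ, ?_⟩
      rw [htake]
      exact NCRA.ReachE.snoc hσ hτ

end

end BACaux

/-! ### STATEMENT 14
For every bounded alternation copyless CRA with regular look-ahead there exists
an unambiguous (nondeterministic) bounded alternation copyless CRA computing
the same function. -/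
theorem BAC_CRA_RLA_to_unambiguous {S A X : Type} [CommSemiring S]
    [DecidableEq X] [Fintype X]
    (M : CRARLA S A X) (hcopy : M.CopylessRLA) (halt : M.BoundedAltRLA)
    (htotal : ∀ w : List A, (M.outputRLA w).isSome) :
    ∃ (Y : Type) (dY : DecidableEq Y) (_ : Fintype Y) (M' : NCRA S A Y),
      M'.Unambiguous ∧ @NCRA.CopylessNCRA S A Y dY M' ∧ M'.BoundedAltNCRA ∧
      ∀ w : List A, ∃ (q : M'.Q) (σ : Y → Expr S Y),
        M'.ReachE w q σ ∧ q ∈ M'.F ∧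
        M.outputRLA w = some (((M'.μ q).subst σ).eval M'.ν0) := by
  classical
  refine ⟨X, inferInstance, inferInstance, BACaux.MN M, ?_, ?_, ?_, ?_⟩
  · intro w
    have H : (M.outAux M.q0 M.ν0 w).isSome := htotal w
    exact ⟨BACaux.rW M w, BACaux.rW_isAccRun M H,
      fun r hr => BACaux.run_unique M H hr⟩
  · constructor
    · intro q a q' σ h
      obtain ⟨t, ht, hτ⟩ := BACaux.Del_inv_sub M h
      subst hτ
      exact hcopy.1 t ht
    · intro q
      match q with
      | none => exact hcopy.2 M.q0
      | some (p, f) => exact hcopy.2 p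
  · obtain ⟨N, hN⟩ := halt
    refine ⟨N, fun w q σ hre hF => ?_⟩
    exact hN w _ (BACaux.reach_final M hre hF).2
  · intro w
    have H : (M.outAux M.q0 M.ν0 w).isSome := htotal w
    obtain ⟨σ, hσ⟩ := BACaux.reach_exists M H w.length (Nat.lt_succ_self _)
    rw [List.take_length] at hσ
    have hF : BACaux.rW M w ⟨w.length, Nat.lt_succ_self _⟩ ∈ (BACaux.MN M).F := by
      have := (BACaux.rW_isAccRun M H).2
      exact this
    exact ⟨_, σ, hσ, hF, (BACaux.reach_final M hσ hF).1⟩
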